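/- arXiv:1310.7273 — 7 statements merged into one kernel-verified Lean document; each statement's English description precedes it below -/
import Mathlib

section
/- Let S be the 6×6 matrix with rows (1,0,0,0,0,0), (0,0,-1,1,0,0), (0,-1,0,1,0,0), (0,0,0,1,0,0), (0,-1,-1,1,1,0), (0,-1,-1,1,0,1), let T₁ be the permutation matrix swapping coordinates 4 and 5, and let R₁ be the permutation matrix swapping coordinates 1 and 2. Then (S·T₁)³ = I₆ and (S·R₁)³ = I₆. -/
/-- `(S·T₁)³ = I₆` and `(S·R₁)³ = I₆` for the Whipple transformation matrix `S`,
the swap `T₁` of coordinates 4,5 and the swap `R₁` of coordinates 1,2. -/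
theorem whipple_braid_relations :
    let S : Matrix (Fin 6) (Fin 6) ℤ :=
      !![1,0,0,0,0,0; 0,0,-1,1,0,0; 0,-1,0,1,0,0; 0,0,0,1,0,0; 0,-1,-1,1,1,0; 0,-1,-1,1,0,1]
    let T₁ : Matrix (Fin 6) (Fin 6) ℤ :=
      !![1,0,0,0,0,0; 0,1,0,0,0,0; 0,0,1,0,0,0; 0,0,0,0,1,0; 0,0,0,1,0,0; 0,0,0,0,0,1]
    let R₁ : Matrix (Fin 6) (Fin 6) ℤ :=
      !![0,1,0,0,0,0; 1,0,0,0,0,0; 0,0,1,0,0,0; 0,0,0,1,0,0; 0,0,0,0,1,0; 0,0,0,0,0,1]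
    (S * T₁) ^ 3 = 1 ∧ (S * R₁) ^ 3 = 1 := by
  constructor <;>
  · ext i j
    fin_cases i <;> fin_cases j <;> decide
end

section
/- The multiplicative group of 6×6 integer matrices generated by S (with rows (1,0,0,0,0,0), (0,0,-1,1,0,0), (0,-1,0,1,0,0), (0,0,0,1,0,0), (0,-1,-1,1,1,0), (0,-1,-1,1,0,1)), the permutation matrices R₁, R₂ (swapping coordinates 1↔2 and 2↔3) and T₁, T₂ (swapping coordinates 4↔5 and 5↔6) is isomorphic to the symmetric group 𝔖₆. -/
namespace WhippleAux

open Matrix Equiv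

abbrev Mat := Matrix (Fin 6) (Fin 6) ℤ
abbrev MatQ := Matrix (Fin 6) (Fin 6) ℚ

/-- Integer permutation matrix of a permutation of `Fin 6`. -/
def pmz (σ : Equiv.Perm (Fin 6)) : Mat := Matrix.of fun i j => if σ j = i then 1 else 0

/-- Rational permutation matrix of a permutation of `Fin 6`. -/
def pm (σ : Equiv.Perm (Fin 6)) : MatQ := Matrix.of fun i j => if σ j = i then 1 else 0

lemma pm_one : pm 1 = 1 := by
  ext i j
  simp [pm, Matrix.one_apply, eq_comm]

lemma pm_mul (σ τ : Equiv.Perm (Fin 6)) : pm (σ * τ) = pm σ * pm τ := by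
  ext i j
  simp only [pm, Matrix.mul_apply, Matrix.of_apply, Equiv.Perm.mul_apply]
  rw [Finset.sum_eq_single (τ j)]
  · simp; split_ifs <;> simp_all [Equiv.Perm.mul_apply]
  · intro k _ hk
    simp [Ne.symm hk]
  · simp

/-- The entrywise cast `ℤ → ℚ` as a ring hom on matrices. -/
def CR : Mat →+* MatQ := (Int.castRingHom ℚ).mapMatrix

/-- The entrywise cast `ℤ → ℚ` as a monoid hom on matrices. -/
def C : Mat →* MatQ := CR.toMonoidHom

lemma C_apply (A : Mat) (i j : Fin 6) : C A i j = (A i j : ℚ) := rfl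

lemma C_injective : Function.Injective C := by
  intro A B h
  ext i j
  have h2 : C A i j = C B i j := Matrix.ext_iff.mpr h i j
  rw [C_apply, C_apply] at h2
  exact_mod_cast h2

lemma C_pmz (σ : Equiv.Perm (Fin 6)) : C (pmz σ) = pm σ := by
  ext i j
  simp [C_apply, pmz, pm, apply_ite]

@[simp] lemma vec6_five {α : Type*} (x0 x1 x2 x3 x4 x5 : α) :
    ![x0,x1,x2,x3,x4,x5] (5 : Fin 6) = x5 := rfl

/-- The intertwining matrix. -/
def Pz : Mat := !![1,0,0,1,1,1; 0,1,0,1,1,1; 0,0,1,1,1,1; 1,1,1,1,2,2; 1,1,1,2,1,2; 1,1,1,2,2,1]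

def Qz : Mat := !![1,-3,-3,1,1,1; -3,1,-3,1,1,1; -3,-3,1,1,1,1; 1,1,1,-3,1,1; 1,1,1,1,-3,1; 1,1,1,1,1,-3]

def P : MatQ := CR Pz

def Q : MatQ := (4 : ℚ)⁻¹ • CR Qz

lemma C_Pz : C Pz = P := rfl

lemma PzQz : Pz * Qz = (4 : ℤ) • (1 : Mat) := by decide

lemma QzPz : Qz * Pz = (4 : ℤ) • (1 : Mat) := by decide

lemma PQ : P * Q = 1 := by
  rw [P, Q, Matrix.mul_smul, ← _root_.map_mul CR, PzQz, map_zsmul, _root_.map_one CR,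
    ← Int.cast_smul_eq_zsmul ℚ, smul_smul]
  norm_num

lemma QP : Q * P = 1 := by
  rw [P, Q, Matrix.smul_mul, ← _root_.map_mul CR, QzPz, map_zsmul, _root_.map_one CR,
    ← Int.cast_smul_eq_zsmul ℚ, smul_smul]
  norm_num

/-- The conjugated permutation representation. -/
def Θ : Equiv.Perm (Fin 6) →* MatQ where
  toFun σ := P * pm σ * Q
  map_one' := by
    show P * pm 1 * Q = 1
    rw [pm_one, mul_one, PQ]
  map_mul' σ τ := by
    show P * pm (σ * τ) * Q = (P * pm σ * Q) * (P * pm τ * Q)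
    rw [pm_mul]
    calc P * (pm σ * pm τ) * Q = P * pm σ * (Q * P) * pm τ * Q := by
          rw [QP]; noncomm_ring
      _ = P * pm σ * Q * (P * pm τ * Q) := by noncomm_ring

lemma Θ_apply (σ : Equiv.Perm (Fin 6)) : Θ σ = P * pm σ * Q := rfl

lemma Θ_injective : Function.Injective Θ := by
  have key : ∀ A : MatQ, Q * (P * A * Q) * P = A := by
    intro A
    calc Q * (P * A * Q) * P = (Q * P) * A * (Q * P) := by noncomm_ring
      _ = A := by rw [QP, one_mul, mul_one]
  intro σ τ h
  rw [Θ_apply, Θ_apply] at h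
  have hpm : pm σ = pm τ := by
    have h2 := congrArg (fun A : MatQ => Q * A * P) h
    simp only [key] at h2
    exact h2
  apply Equiv.ext
  intro j
  have h3 := Matrix.ext_iff.mpr hpm (σ j) j
  simp only [pm, Matrix.of_apply, if_pos rfl] at h3
  by_cases hc : τ j = σ j
  · exact hc.symm
  · rw [if_neg hc] at h3
    exact absurd h3 one_ne_zero

def Sz : Mat := !![1,0,0,0,0,0; 0,0,-1,1,0,0; 0,-1,0,1,0,0; 0,0,0,1,0,0; 0,-1,-1,1,1,0; 0,-1,-1,1,0,1]
def R1z : Mat := !![0,1,0,0,0,0; 1,0,0,0,0,0; 0,0,1,0,0,0; 0,0,0,1,0,0; 0,0,0,0,1,0; 0,0,0,0,0,1]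
def R2z : Mat := !![1,0,0,0,0,0; 0,0,1,0,0,0; 0,1,0,0,0,0; 0,0,0,1,0,0; 0,0,0,0,1,0; 0,0,0,0,0,1]
def T1z : Mat := !![1,0,0,0,0,0; 0,1,0,0,0,0; 0,0,1,0,0,0; 0,0,0,0,1,0; 0,0,0,1,0,0; 0,0,0,0,0,1]
def T2z : Mat := !![1,0,0,0,0,0; 0,1,0,0,0,0; 0,0,1,0,0,0; 0,0,0,1,0,0; 0,0,0,0,0,1; 0,0,0,0,1,0]

lemma inter_S : Sz * Pz = Pz * pmz (Equiv.swap 0 3) := by decide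
lemma inter_R1 : R1z * Pz = Pz * pmz (Equiv.swap 0 1) := by decide
lemma inter_R2 : R2z * Pz = Pz * pmz (Equiv.swap 1 2) := by decide
lemma inter_T1 : T1z * Pz = Pz * pmz (Equiv.swap 3 4) := by decide
lemma inter_T2 : T2z * Pz = Pz * pmz (Equiv.swap 4 5) := by decide

lemma theta_eq (g : Mat) (σ : Equiv.Perm (Fin 6)) (h : g * Pz = Pz * pmz σ) : Θ σ = C g := by
  have hq : C g * P = P * pm σ := by
    have h2 := congrArg C h
    rw [_root_.map_mul, _root_.map_mul, C_pmz, C_Pz] at h2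
    exact h2
  rw [Θ_apply, ← hq, mul_assoc, PQ, mul_one]

/-- The target transposition set. -/
def Tset : Set (Equiv.Perm (Fin 6)) :=
  {Equiv.swap 0 3, Equiv.swap 0 1, Equiv.swap 1 2, Equiv.swap 3 4, Equiv.swap 4 5}

lemma swap_mem_all (x y : Fin 6) : Equiv.swap x y ∈ Submonoid.closure Tset := by
  set M := Submonoid.closure Tset with hM
  have h03 : Equiv.swap (0 : Fin 6) 3 ∈ M := Submonoid.subset_closure (by simp [Tset])
  have h01 : Equiv.swap (0 : Fin 6) 1 ∈ M := Submonoid.subset_closure (by simp [Tset])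
  have h12 : Equiv.swap (1 : Fin 6) 2 ∈ M := Submonoid.subset_closure (by simp [Tset])
  have h34 : Equiv.swap (3 : Fin 6) 4 ∈ M := Submonoid.subset_closure (by simp [Tset])
  have h45 : Equiv.swap (4 : Fin 6) 5 ∈ M := Submonoid.subset_closure (by simp [Tset])
  have h02 : Equiv.swap (0 : Fin 6) 2 ∈ M := SubmonoidClass.swap_mem_trans M h01 h12
  have h04 : Equiv.swap (0 : Fin 6) 4 ∈ M := SubmonoidClass.swap_mem_trans M h03 h34
  have h05 : Equiv.swap (0 : Fin 6) 5 ∈ M := SubmonoidClass.swap_mem_trans M h04 h45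
  have h00 : Equiv.swap (0 : Fin 6) 0 ∈ M := by
    rw [Equiv.swap_self]
    exact one_mem M
  have h0 : ∀ z : Fin 6, Equiv.swap 0 z ∈ M := by
    intro z
    fin_cases z
    exacts [h00, h01, h02, h03, h04, h05]
  have hx0 : Equiv.swap x 0 ∈ M := by rw [Equiv.swap_comm]; exact h0 x
  exact SubmonoidClass.swap_mem_trans M hx0 (h0 y)

lemma closure_Tset : Submonoid.closure Tset = ⊤ := by
  refine le_antisymm le_top ?_
  rw [← Equiv.Perm.mclosure_isSwap (α := Fin 6), Submonoid.closure_le]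
  rintro σ ⟨x, y, -, rfl⟩
  exact swap_mem_all x y

theorem main : Nonempty
    ((Submonoid.closure {Sz, R1z, R2z, T1z, T2z} : Submonoid Mat) ≃* Equiv.Perm (Fin 6)) := by
  have hmap : (Submonoid.closure {Sz, R1z, R2z, T1z, T2z}).map C
      = (⊤ : Submonoid (Equiv.Perm (Fin 6))).map Θ := by
    rw [MonoidHom.map_mclosure, ← closure_Tset, MonoidHom.map_mclosure]
    congr 1
    rw [Tset]
    simp only [Set.image_insert_eq, Set.image_singleton]
    rw [theta_eq Sz _ inter_S, theta_eq R1z _ inter_R1, theta_eq R2z _ inter_R2,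
      theta_eq T1z _ inter_T1, theta_eq T2z _ inter_T2]
  exact ⟨((Submonoid.closure {Sz, R1z, R2z, T1z, T2z}).equivMapOfInjective C
      C_injective).trans ((MulEquiv.submonoidCongr hmap).trans
      (((⊤ : Submonoid (Equiv.Perm (Fin 6))).equivMapOfInjective Θ Θ_injective).symm.trans
      Submonoid.topEquiv))⟩

end WhippleAux

/-- The multiplicative group generated by the Whipple transformation matrix `S`
and the permutation matrices `R₁, R₂, T₁, T₂` is isomorphic to `𝔖₆`.
(All generators are involutions, so the submonoid they generate is a group.) -/
theorem whipple_group_iso_S6 :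
    let S : Matrix (Fin 6) (Fin 6) ℤ :=
      !![1,0,0,0,0,0; 0,0,-1,1,0,0; 0,-1,0,1,0,0; 0,0,0,1,0,0; 0,-1,-1,1,1,0; 0,-1,-1,1,0,1]
    let R₁ : Matrix (Fin 6) (Fin 6) ℤ :=
      !![0,1,0,0,0,0; 1,0,0,0,0,0; 0,0,1,0,0,0; 0,0,0,1,0,0; 0,0,0,0,1,0; 0,0,0,0,0,1]
    let R₂ : Matrix (Fin 6) (Fin 6) ℤ :=
      !![1,0,0,0,0,0; 0,0,1,0,0,0; 0,1,0,0,0,0; 0,0,0,1,0,0; 0,0,0,0,1,0; 0,0,0,0,0,1]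
    let T₁ : Matrix (Fin 6) (Fin 6) ℤ :=
      !![1,0,0,0,0,0; 0,1,0,0,0,0; 0,0,1,0,0,0; 0,0,0,0,1,0; 0,0,0,1,0,0; 0,0,0,0,0,1]
    let T₂ : Matrix (Fin 6) (Fin 6) ℤ :=
      !![1,0,0,0,0,0; 0,1,0,0,0,0; 0,0,1,0,0,0; 0,0,0,1,0,0; 0,0,0,0,0,1; 0,0,0,0,1,0]
    Nonempty ((Submonoid.closure {S, R₁, R₂, T₁, T₂} : Submonoid (Matrix (Fin 6) (Fin 6) ℤ))
      ≃* Equiv.Perm (Fin 6)) := by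
  exact WhippleAux.main
end

section
/- Let S₀ be the 6×6 permutation matrix swapping coordinates 1 and 2, let S₂ be the permutation matrix swapping coordinates 5 and 6, and let S₁ be the 6×6 matrix with rows (1,0,0,0,0,0), (0,-1,0,0,1,0), (0,0,-1,0,1,0), (0,-1,-1,0,1,1), (0,0,0,0,1,0), (0,-1,-1,1,1,0). Then S₀² = S₁² = S₂² = I₆, (S₀S₂)² = I₆, (S₀S₁)⁴ = I₆, and (S₁S₂)⁴ = I₆. -/
private lemma one_eq :
    (1 : Matrix (Fin 6) (Fin 6) ℤ) = !![1,0,0,0,0,0; 0,1,0,0,0,0; 0,0,1,0,0,0; 0,0,0,1,0,0; 0,0,0,0,1,0; 0,0,0,0,0,1] := by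
  ext i j
  fin_cases i <;> fin_cases j <;> simp [Matrix.one_apply] <;> decide

private lemma m00 :
    (!![0,1,0,0,0,0; 1,0,0,0,0,0; 0,0,1,0,0,0; 0,0,0,1,0,0; 0,0,0,0,1,0; 0,0,0,0,0,1] * !![0,1,0,0,0,0; 1,0,0,0,0,0; 0,0,1,0,0,0; 0,0,0,1,0,0; 0,0,0,0,1,0; 0,0,0,0,0,1] :
      Matrix (Fin 6) (Fin 6) ℤ) = !![1,0,0,0,0,0; 0,1,0,0,0,0; 0,0,1,0,0,0; 0,0,0,1,0,0; 0,0,0,0,1,0; 0,0,0,0,0,1] := by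
  ext i j
  fin_cases i <;> fin_cases j <;> simp [Matrix.mul_apply, Fin.sum_univ_six] <;> decide

private lemma m11 :
    (!![1,0,0,0,0,0; 0,-1,0,0,1,0; 0,0,-1,0,1,0; 0,-1,-1,0,1,1; 0,0,0,0,1,0; 0,-1,-1,1,1,0] * !![1,0,0,0,0,0; 0,-1,0,0,1,0; 0,0,-1,0,1,0; 0,-1,-1,0,1,1; 0,0,0,0,1,0; 0,-1,-1,1,1,0] :
      Matrix (Fin 6) (Fin 6) ℤ) = !![1,0,0,0,0,0; 0,1,0,0,0,0; 0,0,1,0,0,0; 0,0,0,1,0,0; 0,0,0,0,1,0; 0,0,0,0,0,1] := by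
  ext i j
  fin_cases i <;> fin_cases j <;> simp [Matrix.mul_apply, Fin.sum_univ_six] <;> decide

private lemma m22 :
    (!![1,0,0,0,0,0; 0,1,0,0,0,0; 0,0,1,0,0,0; 0,0,0,1,0,0; 0,0,0,0,0,1; 0,0,0,0,1,0] * !![1,0,0,0,0,0; 0,1,0,0,0,0; 0,0,1,0,0,0; 0,0,0,1,0,0; 0,0,0,0,0,1; 0,0,0,0,1,0] :
      Matrix (Fin 6) (Fin 6) ℤ) = !![1,0,0,0,0,0; 0,1,0,0,0,0; 0,0,1,0,0,0; 0,0,0,1,0,0; 0,0,0,0,1,0; 0,0,0,0,0,1] := by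
  ext i j
  fin_cases i <;> fin_cases j <;> simp [Matrix.mul_apply, Fin.sum_univ_six] <;> decide

private lemma m02 :
    (!![0,1,0,0,0,0; 1,0,0,0,0,0; 0,0,1,0,0,0; 0,0,0,1,0,0; 0,0,0,0,1,0; 0,0,0,0,0,1] * !![1,0,0,0,0,0; 0,1,0,0,0,0; 0,0,1,0,0,0; 0,0,0,1,0,0; 0,0,0,0,0,1; 0,0,0,0,1,0] :
      Matrix (Fin 6) (Fin 6) ℤ) = !![0,1,0,0,0,0; 1,0,0,0,0,0; 0,0,1,0,0,0; 0,0,0,1,0,0; 0,0,0,0,0,1; 0,0,0,0,1,0] := by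
  ext i j
  fin_cases i <;> fin_cases j <;> simp [Matrix.mul_apply, Fin.sum_univ_six] <;> decide

private lemma mPP :
    (!![0,1,0,0,0,0; 1,0,0,0,0,0; 0,0,1,0,0,0; 0,0,0,1,0,0; 0,0,0,0,0,1; 0,0,0,0,1,0] * !![0,1,0,0,0,0; 1,0,0,0,0,0; 0,0,1,0,0,0; 0,0,0,1,0,0; 0,0,0,0,0,1; 0,0,0,0,1,0] :
      Matrix (Fin 6) (Fin 6) ℤ) = !![1,0,0,0,0,0; 0,1,0,0,0,0; 0,0,1,0,0,0; 0,0,0,1,0,0; 0,0,0,0,1,0; 0,0,0,0,0,1] := by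
  ext i j
  fin_cases i <;> fin_cases j <;> simp [Matrix.mul_apply, Fin.sum_univ_six] <;> decide

private lemma m01 :
    (!![0,1,0,0,0,0; 1,0,0,0,0,0; 0,0,1,0,0,0; 0,0,0,1,0,0; 0,0,0,0,1,0; 0,0,0,0,0,1] * !![1,0,0,0,0,0; 0,-1,0,0,1,0; 0,0,-1,0,1,0; 0,-1,-1,0,1,1; 0,0,0,0,1,0; 0,-1,-1,1,1,0] :
      Matrix (Fin 6) (Fin 6) ℤ) = !![0,-1,0,0,1,0; 1,0,0,0,0,0; 0,0,-1,0,1,0; 0,-1,-1,0,1,1; 0,0,0,0,1,0; 0,-1,-1,1,1,0] := by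
  ext i j
  fin_cases i <;> fin_cases j <;> simp [Matrix.mul_apply, Fin.sum_univ_six] <;> decide

private lemma mAA :
    (!![0,-1,0,0,1,0; 1,0,0,0,0,0; 0,0,-1,0,1,0; 0,-1,-1,0,1,1; 0,0,0,0,1,0; 0,-1,-1,1,1,0] * !![0,-1,0,0,1,0; 1,0,0,0,0,0; 0,0,-1,0,1,0; 0,-1,-1,0,1,1; 0,0,0,0,1,0; 0,-1,-1,1,1,0] :
      Matrix (Fin 6) (Fin 6) ℤ) = !![-1,0,0,0,1,0; 0,-1,0,0,1,0; 0,0,1,0,0,0; -1,-1,0,1,1,0; 0,0,0,0,1,0; -1,-1,0,0,1,1] := by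
  ext i j
  fin_cases i <;> fin_cases j <;> simp [Matrix.mul_apply, Fin.sum_univ_six] <;> decide

private lemma mBB :
    (!![-1,0,0,0,1,0; 0,-1,0,0,1,0; 0,0,1,0,0,0; -1,-1,0,1,1,0; 0,0,0,0,1,0; -1,-1,0,0,1,1] * !![-1,0,0,0,1,0; 0,-1,0,0,1,0; 0,0,1,0,0,0; -1,-1,0,1,1,0; 0,0,0,0,1,0; -1,-1,0,0,1,1] :
      Matrix (Fin 6) (Fin 6) ℤ) = !![1,0,0,0,0,0; 0,1,0,0,0,0; 0,0,1,0,0,0; 0,0,0,1,0,0; 0,0,0,0,1,0; 0,0,0,0,0,1] := by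
  ext i j
  fin_cases i <;> fin_cases j <;> simp [Matrix.mul_apply, Fin.sum_univ_six] <;> decide

private lemma m12 :
    (!![1,0,0,0,0,0; 0,-1,0,0,1,0; 0,0,-1,0,1,0; 0,-1,-1,0,1,1; 0,0,0,0,1,0; 0,-1,-1,1,1,0] * !![1,0,0,0,0,0; 0,1,0,0,0,0; 0,0,1,0,0,0; 0,0,0,1,0,0; 0,0,0,0,0,1; 0,0,0,0,1,0] :
      Matrix (Fin 6) (Fin 6) ℤ) = !![1,0,0,0,0,0; 0,-1,0,0,0,1; 0,0,-1,0,0,1; 0,-1,-1,0,1,1; 0,0,0,0,0,1; 0,-1,-1,1,0,1] := by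
  ext i j
  fin_cases i <;> fin_cases j <;> simp [Matrix.mul_apply, Fin.sum_univ_six] <;> decide

private lemma mCC :
    (!![1,0,0,0,0,0; 0,-1,0,0,0,1; 0,0,-1,0,0,1; 0,-1,-1,0,1,1; 0,0,0,0,0,1; 0,-1,-1,1,0,1] * !![1,0,0,0,0,0; 0,-1,0,0,0,1; 0,0,-1,0,0,1; 0,-1,-1,0,1,1; 0,0,0,0,0,1; 0,-1,-1,1,0,1] :
      Matrix (Fin 6) (Fin 6) ℤ) = !![1,0,0,0,0,0; 0,0,-1,1,0,0; 0,-1,0,1,0,0; 0,0,0,1,0,0; 0,-1,-1,1,0,1; 0,-1,-1,1,1,0] := by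
  ext i j
  fin_cases i <;> fin_cases j <;> simp [Matrix.mul_apply, Fin.sum_univ_six] <;> decide

private lemma mDD :
    (!![1,0,0,0,0,0; 0,0,-1,1,0,0; 0,-1,0,1,0,0; 0,0,0,1,0,0; 0,-1,-1,1,0,1; 0,-1,-1,1,1,0] * !![1,0,0,0,0,0; 0,0,-1,1,0,0; 0,-1,0,1,0,0; 0,0,0,1,0,0; 0,-1,-1,1,0,1; 0,-1,-1,1,1,0] :
      Matrix (Fin 6) (Fin 6) ℤ) = !![1,0,0,0,0,0; 0,1,0,0,0,0; 0,0,1,0,0,0; 0,0,0,1,0,0; 0,0,0,0,1,0; 0,0,0,0,0,1] := by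
  ext i j
  fin_cases i <;> fin_cases j <;> simp [Matrix.mul_apply, Fin.sum_univ_six] <;> decide

/-- The generators `S₀, S₁, S₂` of the invariance group of the rectangular
`Aₙ` `₄F₃` series satisfy the affine `C̃₂` Coxeter relations. -/
theorem rectangular_C2_relations :
    let S₀ : Matrix (Fin 6) (Fin 6) ℤ :=
      !![0,1,0,0,0,0; 1,0,0,0,0,0; 0,0,1,0,0,0; 0,0,0,1,0,0; 0,0,0,0,1,0; 0,0,0,0,0,1]
    let S₁ : Matrix (Fin 6) (Fin 6) ℤ :=
      !![1,0,0,0,0,0; 0,-1,0,0,1,0; 0,0,-1,0,1,0; 0,-1,-1,0,1,1; 0,0,0,0,1,0; 0,-1,-1,1,1,0]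
    let S₂ : Matrix (Fin 6) (Fin 6) ℤ :=
      !![1,0,0,0,0,0; 0,1,0,0,0,0; 0,0,1,0,0,0; 0,0,0,1,0,0; 0,0,0,0,0,1; 0,0,0,0,1,0]
    S₀ ^ 2 = 1 ∧ S₁ ^ 2 = 1 ∧ S₂ ^ 2 = 1 ∧
      (S₀ * S₂) ^ 2 = 1 ∧ (S₀ * S₁) ^ 4 = 1 ∧ (S₁ * S₂) ^ 4 = 1 := by
  intro S₀ S₁ S₂
  have h4 : ∀ X : Matrix (Fin 6) (Fin 6) ℤ, X ^ 4 = X * X * (X * X) := by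
    intro X; rw [show (4 : ℕ) = 2 * 2 from rfl, pow_mul, pow_two, pow_two]
  refine ⟨?_, ?_, ?_, ?_, ?_, ?_⟩
  · rw [pow_two, m00, one_eq]
  · rw [pow_two, m11, one_eq]
  · rw [pow_two, m22, one_eq]
  · rw [pow_two, m02, mPP, one_eq]
  · rw [h4, m01, mAA, mBB, one_eq]
  · rw [h4, m12, mCC, mDD, one_eq]
end

section
/- The group G generated by matrices S₀, S₁, S₂ (as in the invariance group of rectangular Aₙ ₄F₃ series) is isomorphic to a semidirect product of the Weyl group W(C₂) of order 8 acting on (ℤ/3ℤ)², where W(C₂) acts on the coroot lattice of C₂ modulo 3. -/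
namespace RectAux

abbrev Mat := Matrix (Fin 6) (Fin 6) ℤ

def M0 : Mat := !![0,1,0,0,0,0; 1,0,0,0,0,0; 0,0,1,0,0,0; 0,0,0,1,0,0; 0,0,0,0,1,0; 0,0,0,0,0,1]
def M1 : Mat := !![1,0,0,0,0,0; 0,-1,0,0,1,0; 0,0,-1,0,1,0; 0,-1,-1,0,1,1; 0,0,0,0,1,0; 0,-1,-1,1,1,0]
def M2 : Mat := !![1,0,0,0,0,0; 0,1,0,0,0,0; 0,0,1,0,0,0; 0,0,0,1,0,0; 0,0,0,0,0,1; 0,0,0,0,1,0]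
def N1 : Mat := !![0,-1,0,0,0,1; -1,0,0,0,0,1; 0,0,1,0,0,0; -1,-1,0,1,0,1; 0,0,0,0,0,1; -1,-1,0,0,1,1]
def N2 : Mat := !![-1,0,0,0,0,1; -1,-1,-1,1,0,1; -1,0,0,1,0,0; -1,-1,0,1,0,1; -1,0,-1,1,0,1; -2,-1,-1,1,1,1]
def R : Mat := !![-1,0,0,0,0,1; 0,1,0,0,0,0; 0,0,-1,0,0,1; -1,0,-1,0,1,1; 0,0,0,0,0,1; -1,0,-1,1,0,1]
def S : Mat := !![-1,0,0,0,1,0; 0,1,0,0,0,0; 0,0,-1,0,1,0; -1,0,-1,0,1,1; 0,0,0,0,1,0; -1,0,-1,1,1,0]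

abbrev Nn := Multiplicative (ZMod 3 × ZMod 3)

def ρ : AddAut (ZMod 3 × ZMod 3) :=
  { toFun := fun v => (v.1 + 2*v.2, 2*v.1 + 2*v.2)
    invFun := fun v => (2*v.1 + v.2, v.1 + v.2)
    left_inv := by decide
    right_inv := by decide
    map_add' := by decide }

def σ' : AddAut (ZMod 3 × ZMod 3) :=
  { toFun := fun v => (2*v.1, v.1 + v.2)
    invFun := fun v => (2*v.1, v.1 + v.2)
    left_inv := by decide
    right_inv := by decide
    map_add' := by decide }

def ρₘ : MulAut Nn := AddEquiv.toMultiplicative ρ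
def σₘ : MulAut Nn := AddEquiv.toMultiplicative σ'

instance : DecidableEq (MulAut Nn) := fun f g =>
  decidable_of_iff (∀ x, f x = g x) ⟨fun h => MulEquiv.ext h, fun h x => by rw [h]⟩

def φf : DihedralGroup 4 → MulAut Nn
  | .r i => ρₘ ^ i.val
  | .sr i => σₘ * ρₘ ^ i.val

def φ : DihedralGroup 4 →* MulAut Nn :=
  { toFun := φf
    map_one' := by decide
    map_mul' := by rintro (i | i) (j | j) <;> revert i j <;> decide }

lemma hN1 : N1 ^ (3:ℕ) = 1 := by decide
lemma hN2 : N2 ^ (3:ℕ) = 1 := by decide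
lemma hcomm : Commute N1 N2 := show N1 * N2 = N2 * N1 by decide

lemma fn_key (a b c d : ZMod 3) :
    N1 ^ (a+c).val * N2 ^ (b+d).val
      = (N1 ^ a.val * N2 ^ b.val) * (N1 ^ c.val * N2 ^ d.val) := by
  rw [ZMod.val_add, ZMod.val_add, ← pow_eq_pow_mod _ hN1, ← pow_eq_pow_mod _ hN2,
    pow_add, pow_add, mul_assoc, ← mul_assoc (N1 ^ c.val),
    (hcomm.pow_pow c.val b.val).eq]
  simp only [← mul_assoc]

def fn : Nn →* Mat :=
  { toFun := fun n => N1 ^ (n.toAdd.1.val) * N2 ^ (n.toAdd.2.val)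
    map_one' := by decide
    map_mul' := fun x y => fn_key x.toAdd.1 x.toAdd.2 y.toAdd.1 y.toAdd.2 }

def fhf : DihedralGroup 4 → Mat
  | .r i => R ^ i.val
  | .sr i => S * R ^ i.val

lemma hR4 : R ^ (4:ℕ) = 1 := by decide
lemma hS2 : S * S = 1 := by decide
lemma hRS : R * S = S * R ^ (3:ℕ) := by decide

lemma hswap : ∀ m : ℕ, R ^ m * S = S * R ^ (3*m)
  | 0 => by simp
  | (k+1) => by
    calc R ^ (k+1) * S = R ^ k * (R * S) := by rw [pow_succ, mul_assoc]
    _ = R ^ k * S * R ^ (3:ℕ) := by rw [hRS, ← mul_assoc]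
    _ = S * R ^ (3*k) * R ^ (3:ℕ) := by rw [hswap k]
    _ = S * R ^ (3*(k+1)) := by rw [mul_assoc, ← pow_add, Nat.mul_succ]

lemma esub : ∀ i j : ZMod 4, (j - i).val = (3 * i.val + j.val) % 4 := by decide

def fh : DihedralGroup 4 →* Mat :=
  { toFun := fhf
    map_one' := by decide
    map_mul' := by
      rintro (i | i) (j | j)
      · show R ^ (i+j).val = R ^ i.val * R ^ j.val
        rw [ZMod.val_add, ← pow_eq_pow_mod _ hR4, pow_add]
      · show S * R ^ (j-i).val = R ^ i.val * (S * R ^ j.val)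
        calc S * R ^ (j - i).val = S * R ^ (3*i.val + j.val) := by
              rw [esub i j, ← pow_eq_pow_mod _ hR4]
        _ = S * R ^ (3*i.val) * R ^ j.val := by rw [pow_add, ← mul_assoc]
        _ = R ^ i.val * S * R ^ j.val := by rw [← hswap]
        _ = R ^ i.val * (S * R ^ j.val) := by rw [mul_assoc]
      · show S * R ^ (i+j).val = (S * R ^ i.val) * R ^ j.val
        rw [ZMod.val_add, ← pow_eq_pow_mod _ hR4, pow_add, mul_assoc]
      · show R ^ (j-i).val = (S * R ^ i.val) * (S * R ^ j.val)
        calc R ^ (j - i).val = R ^ (3*i.val + j.val) := by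
              rw [esub i j, ← pow_eq_pow_mod _ hR4]
        _ = (S * S) * (R ^ (3*i.val) * R ^ j.val) := by
              rw [pow_add, hS2, one_mul]
        _ = S * (S * R ^ (3*i.val)) * R ^ j.val := by simp only [mul_assoc]
        _ = S * (R ^ i.val * S) * R ^ j.val := by rw [← hswap]
        _ = (S * R ^ i.val) * (S * R ^ j.val) := by simp only [mul_assoc] }

abbrev K := SemidirectProduct Nn (DihedralGroup 4) φ

instance : DecidableEq K := fun x y =>
  decidable_of_iff (x.left = y.left ∧ x.right = y.right)
    ⟨fun h => SemidirectProduct.ext h.1 h.2, fun h => by rw [h]; exact ⟨rfl, rfl⟩⟩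

lemma compat_r1 : ∀ n : Nn, fn (φ (.r 1) n) * fh (.r 1) = fh (.r 1) * fn n := by decide
lemma compat_s : ∀ n : Nn, fn (φ (.sr 0) n) * fh (.sr 0) = fh (.sr 0) * fn n := by decide

lemma compat_mul {h₁ h₂ : DihedralGroup 4}
    (c₁ : ∀ n : Nn, fn (φ h₁ n) * fh h₁ = fh h₁ * fn n)
    (c₂ : ∀ n : Nn, fn (φ h₂ n) * fh h₂ = fh h₂ * fn n) :
    ∀ n : Nn, fn (φ (h₁ * h₂) n) * fh (h₁ * h₂) = fh (h₁ * h₂) * fn n := by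
  intro n
  have e1 : φ (h₁ * h₂) n = φ h₁ (φ h₂ n) := by rw [map_mul]; rfl
  rw [e1, map_mul fh, ← mul_assoc, c₁ (φ h₂ n), mul_assoc, c₂ n, ← mul_assoc]

lemma compat_pow {h : DihedralGroup 4}
    (c : ∀ n : Nn, fn (φ h n) * fh h = fh h * fn n) :
    ∀ k : ℕ, ∀ n : Nn, fn (φ (h ^ k) n) * fh (h ^ k) = fh (h ^ k) * fn n := by
  intro k
  induction k with
  | zero => intro n; simp
  | succ m ih => rw [pow_succ]; exact compat_mul ih c

lemma r_eq : ∀ i : ZMod 4, (DihedralGroup.r i : DihedralGroup 4) = .r 1 ^ i.val := by decide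
lemma sr_eq : ∀ i : ZMod 4, (DihedralGroup.sr i : DihedralGroup 4) = .sr 0 * .r 1 ^ i.val := by
  decide

lemma compat : ∀ (h : DihedralGroup 4) (n : Nn), fn (φ h n) * fh h = fh h * fn n := by
  rintro (i | i) n
  · rw [r_eq i]; exact compat_pow compat_r1 i.val n
  · rw [sr_eq i]; exact compat_mul compat_s (compat_pow compat_r1 i.val) n

def f : K →* Mat :=
  { toFun := fun x => fn x.left * fh x.right
    map_one' := by
      show fn 1 * fh 1 = 1
      rw [map_one, map_one, one_mul]
    map_mul' := by
      intro x y
      show fn (x * y).left * fh (x * y).right = fn x.left * fh x.right * (fn y.left * fh y.right)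
      rw [SemidirectProduct.mul_left, SemidirectProduct.mul_right, map_mul, map_mul,
        mul_assoc, ← mul_assoc (fn (φ x.right y.left)), compat x.right y.left]
      simp only [← mul_assoc] }

lemma t1 : ∀ (v : ZMod 3 × ZMod 3) (i : ZMod 4),
    (N1 ^ v.1.val * N2 ^ v.2.val) * (R ^ i.val) = 1 → v = 0 ∧ i = 0 := by decide
lemma t2 : ∀ (v : ZMod 3 × ZMod 3) (i : ZMod 4),
    (N1 ^ v.1.val * N2 ^ v.2.val) * (S * R ^ i.val) = 1 → False := by decide

lemma ktriv : ∀ z : K, f z = 1 → z = 1 := by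
  rintro ⟨n, i | i⟩ hz
  · obtain ⟨hv, hi⟩ := t1 n.toAdd i hz
    subst hi
    exact SemidirectProduct.ext hv rfl
  · exact (t2 n.toAdd i hz).elim

lemma f_inj : Function.Injective f := by
  intro x y hxy
  have h1 : f (y⁻¹ * x) = 1 := by
    calc f (y⁻¹ * x) = f y⁻¹ * f x := map_mul f _ _
    _ = f y⁻¹ * f y := by rw [hxy]
    _ = f (y⁻¹ * y) := (map_mul f _ _).symm
    _ = 1 := by rw [inv_mul_cancel, map_one]
  exact (inv_mul_eq_one.mp (ktriv _ h1)).symm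

def kk0 : K := ⟨Multiplicative.ofAdd (2, 1), .sr 3⟩
def kk1 : K := ⟨Multiplicative.ofAdd (0, 1), .sr 2⟩
def kk2 : K := ⟨Multiplicative.ofAdd (0, 0), .sr 1⟩
def Ak : K := ⟨Multiplicative.ofAdd (1, 0), 1⟩
def Bk : K := ⟨Multiplicative.ofAdd (0, 1), 1⟩
def Rk : K := ⟨1, .r 1⟩
def Sk : K := ⟨1, .sr 0⟩

lemma hfk0 : f kk0 = M0 := by decide
lemma hfk1 : f kk1 = M1 := by decide
lemma hfk2 : f kk2 = M2 := by decide

lemma hA : Ak = kk1 * kk0 * kk1 * kk2 := by decide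
lemma hB : Bk = kk1 * kk0 * kk2 * kk1 * kk0 * kk2 := by decide
lemma hR : Rk = kk0 * kk1 * kk0 * kk2 := by decide
lemma hS : Sk = kk0 * kk1 * kk0 := by decide

lemma grel : ∀ (p q : ZMod 3) (i : ZMod 4),
    (⟨Multiplicative.ofAdd (p, q), .r i⟩ : K) = Ak ^ p.val * Bk ^ q.val * Rk ^ i.val := by decide
lemma gsr : ∀ (p q : ZMod 3) (i : ZMod 4),
    (⟨Multiplicative.ofAdd (p, q), .sr i⟩ : K)
      = Ak ^ p.val * Bk ^ q.val * (Sk * Rk ^ i.val) := by decide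

lemma hTop : Submonoid.closure ({kk0, kk1, kk2} : Set K) = ⊤ := by
  rw [eq_top_iff]
  intro x _
  set C := Submonoid.closure ({kk0, kk1, kk2} : Set K) with hC
  have m0 : kk0 ∈ C := Submonoid.subset_closure (by simp)
  have m1 : kk1 ∈ C := Submonoid.subset_closure (by simp)
  have m2 : kk2 ∈ C := Submonoid.subset_closure (by simp)
  have mA : Ak ∈ C := hA ▸ mul_mem (mul_mem (mul_mem m1 m0) m1) m2
  have mB : Bk ∈ C := hB ▸ mul_mem (mul_mem (mul_mem (mul_mem (mul_mem m1 m0) m2) m1) m0) m2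
  have mR : Rk ∈ C := hR ▸ mul_mem (mul_mem (mul_mem m0 m1) m0) m2
  have mS : Sk ∈ C := hS ▸ mul_mem (mul_mem m0 m1) m0
  obtain ⟨n, i | i⟩ := x
  · rw [show (⟨n, .r i⟩ : K) = Ak ^ n.toAdd.1.val * Bk ^ n.toAdd.2.val * Rk ^ i.val from
      grel n.toAdd.1 n.toAdd.2 i]
    exact mul_mem (mul_mem (pow_mem mA _) (pow_mem mB _)) (pow_mem mR _)
  · rw [show (⟨n, .sr i⟩ : K)
        = Ak ^ n.toAdd.1.val * Bk ^ n.toAdd.2.val * (Sk * Rk ^ i.val) from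
      gsr n.toAdd.1 n.toAdd.2 i]
    exact mul_mem (mul_mem (pow_mem mA _) (pow_mem mB _)) (mul_mem mS (pow_mem mR _))

def C' : Submonoid Mat := Submonoid.closure {M0, M1, M2}

lemma frange : MonoidHom.mrange f = C' := by
  rw [MonoidHom.mrange_eq_map, ← hTop, MonoidHom.map_mclosure]
  unfold C'
  congr 1
  rw [Set.image_insert_eq, Set.image_insert_eq, Set.image_singleton, hfk0, hfk1, hfk2]

def fRes : K →* C' := f.codRestrict C' (fun x => by rw [← frange]; exact ⟨x, rfl⟩)

noncomputable def finalEquiv : C' ≃* K := by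
  refine (MulEquiv.ofBijective fRes ⟨?_, ?_⟩).symm
  · intro x y hxy
    exact f_inj (congrArg Subtype.val hxy)
  · rintro ⟨m, hm⟩
    rw [← frange] at hm
    obtain ⟨x, hx⟩ := hm
    exact ⟨x, Subtype.ext hx⟩

end RectAux

/-- The group `G = ⟨S₀, S₁, S₂⟩` is isomorphic to a semidirect product of the
Weyl group `W(C₂)` (the dihedral group of order 8) acting on `(ℤ/3ℤ)²`
(the coroot lattice of `C₂` modulo 3). -/
theorem rectangular_group_semidirect_product :
    let S₀ : Matrix (Fin 6) (Fin 6) ℤ :=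
      !![0,1,0,0,0,0; 1,0,0,0,0,0; 0,0,1,0,0,0; 0,0,0,1,0,0; 0,0,0,0,1,0; 0,0,0,0,0,1]
    let S₁ : Matrix (Fin 6) (Fin 6) ℤ :=
      !![1,0,0,0,0,0; 0,-1,0,0,1,0; 0,0,-1,0,1,0; 0,-1,-1,0,1,1; 0,0,0,0,1,0; 0,-1,-1,1,1,0]
    let S₂ : Matrix (Fin 6) (Fin 6) ℤ :=
      !![1,0,0,0,0,0; 0,1,0,0,0,0; 0,0,1,0,0,0; 0,0,0,1,0,0; 0,0,0,0,0,1; 0,0,0,0,1,0]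
    ∃ φ : DihedralGroup 4 →* MulAut (Multiplicative (ZMod 3 × ZMod 3)),
      Nonempty ((Submonoid.closure {S₀, S₁, S₂} : Submonoid (Matrix (Fin 6) (Fin 6) ℤ))
        ≃* (Multiplicative (ZMod 3 × ZMod 3)) ⋊[φ] DihedralGroup 4) := by
  intro S₀ S₁ S₂
  exact ⟨RectAux.φ, ⟨RectAux.finalEquiv⟩⟩
end

section
/- In the group G of order 72 generated by S₀, S₁, S₂ (the invariance group of rectangular Aₙ ₄F₃ series), with H the subgroup generated by S₀ and S₂, the double coset space H\G/H has exactly 8 elements, with representatives id, s₁, s₁s₂s₁, s₁s₀s₁, s₁s₀s₂s₁, s₁s₂s₁s₀s₁, s₁s₀s₁s₂s₁, and s₁s₀s₂s₁s₀s₂s₁. -/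
namespace RectDoset

def s0 : Matrix (Fin 6) (Fin 6) ℤ :=
  !![0,1,0,0,0,0; 1,0,0,0,0,0; 0,0,1,0,0,0; 0,0,0,1,0,0; 0,0,0,0,1,0; 0,0,0,0,0,1]
def s1 : Matrix (Fin 6) (Fin 6) ℤ :=
  !![1,0,0,0,0,0; 0,-1,0,0,1,0; 0,0,-1,0,1,0; 0,-1,-1,0,1,1; 0,0,0,0,1,0; 0,-1,-1,1,1,0]
def s2 : Matrix (Fin 6) (Fin 6) ℤ :=
  !![1,0,0,0,0,0; 0,1,0,0,0,0; 0,0,1,0,0,0; 0,0,0,1,0,0; 0,0,0,0,0,1; 0,0,0,0,1,0]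

def Gm : Submonoid (Matrix (Fin 6) (Fin 6) ℤ) := Submonoid.closure {s0, s1, s2}
def Hm : Submonoid (Matrix (Fin 6) (Fin 6) ℤ) := Submonoid.closure {s0, s2}
def ds : Matrix (Fin 6) (Fin 6) ℤ → Set (Matrix (Fin 6) (Fin 6) ℤ) :=
  fun g => {x | ∃ h₁ ∈ Hm, ∃ h₂ ∈ Hm, x = h₁ * g * h₂}

def hv : Fin 4 → Matrix (Fin 6) (Fin 6) ℤ := ![1, s0, s2, s0 * s2]
def rep : Fin 8 → Matrix (Fin 6) (Fin 6) ℤ :=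
  ![1, s1, s1*s2*s1, s1*s0*s1, s1*s0*s2*s1, s1*s2*s1*s0*s1, s1*s0*s1*s2*s1,
    s1*s0*s2*s1*s0*s2*s1]

lemma hv_mul : ∀ k l : Fin 4, ∃ m, hv k * hv l = hv m := by decide
lemma hv_sq : ∀ k : Fin 4, hv k * hv k = 1 := by decide

lemma hv_mem : ∀ k : Fin 4, hv k ∈ Hm := by
  have h0 : s0 ∈ Hm := Submonoid.subset_closure (by simp)
  have h2 : s2 ∈ Hm := Submonoid.subset_closure (by simp)
  intro k
  fin_cases k
  · exact one_mem _
  · exact h0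
  · exact h2
  · exact mul_mem h0 h2

lemma mem_Hm_iff (x : Matrix (Fin 6) (Fin 6) ℤ) : x ∈ Hm ↔ ∃ k : Fin 4, x = hv k := by
  constructor
  · intro hx
    induction hx using Submonoid.closure_induction with
    | mem y hy =>
      simp only [Set.mem_insert_iff, Set.mem_singleton_iff] at hy
      rcases hy with hy | hy
      · exact ⟨1, by simp [hy, hv]⟩
      · exact ⟨2, by simp [hy, hv]⟩
    | one => exact ⟨0, rfl⟩
    | mul a b _ _ ha hb =>
      obtain ⟨k, rfl⟩ := ha
      obtain ⟨l, rfl⟩ := hb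
      exact hv_mul k l
  · rintro ⟨k, rfl⟩; exact hv_mem k

-- transition tables : rep i * hv k * s1 = hv (ta i k) * rep (tj i k) * hv (tb i k)
def tj : Fin 8 → Fin 4 → Fin 8 :=
  ![![1,1,1,1], ![0,3,2,4], ![1,5,1,5], ![1,1,6,6],
    ![1,5,6,7], ![2,4,2,4], ![3,3,4,4], ![4,4,4,4]]
def ta : Fin 8 → Fin 4 → Fin 4 :=
  ![![0,1,2,3], ![0,0,0,0], ![0,0,2,2], ![0,1,0,1],
    ![0,0,0,0], ![0,0,1,1], ![0,2,0,2], ![0,2,1,3]]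
def tb : Fin 8 → Fin 4 → Fin 4 :=
  ![![0,0,0,0], ![0,0,0,0], ![2,0,2,0], ![1,1,0,0],
    ![3,1,2,0], ![1,1,1,1], ![2,2,2,2], ![3,3,3,3]]

lemma key32 : ∀ (i : Fin 8) (k : Fin 4),
    rep i * hv k * s1 = hv (ta i k) * rep (tj i k) * hv (tb i k) := by decide

lemma sep : ∀ (i j : Fin 8), i ≠ j → ∀ (a b : Fin 4),
    rep i ≠ hv a * rep j * hv b := by decide

def Q (g : Matrix (Fin 6) (Fin 6) ℤ) : Prop :=
  ∃ (i : Fin 8) (a b : Fin 4), g = hv a * rep i * hv b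

lemma Q_of_mem {g : Matrix (Fin 6) (Fin 6) ℤ} (hg : g ∈ Gm) : Q g := by
  induction hg using Submonoid.closure_induction_right with
  | one => exact ⟨0, 0, 0, by simp [rep, hv]⟩
  | mul_right x hx y hy hQ =>
    obtain ⟨i, a, b, rfl⟩ := hQ
    rcases hy with hy | hy | hy
    · subst hy
      have : s0 = hv 1 := rfl
      obtain ⟨m, hm⟩ := hv_mul b 1
      exact ⟨i, a, m, by rw [this, mul_assoc, hm]⟩
    · subst hy
      obtain ⟨m, hm⟩ := hv_mul a (ta i b)
      refine ⟨tj i b, m, tb i b, ?_⟩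
      rw [mul_assoc (hv a), mul_assoc (hv a), key32 i b, ← mul_assoc, ← mul_assoc, hm]
    · subst hy
      have : s2 = hv 2 := rfl
      obtain ⟨m, hm⟩ := hv_mul b 2
      exact ⟨i, a, m, by rw [this, mul_assoc, hm]⟩

lemma hv_sq' (k : Fin 4) (x : Matrix (Fin 6) (Fin 6) ℤ) : hv k * (hv k * x) = x := by
  rw [← mul_assoc, hv_sq, one_mul]

lemma ds_hv (g : Matrix (Fin 6) (Fin 6) ℤ) (a b : Fin 4) :
    ds (hv a * g * hv b) = ds g := by
  ext x
  constructor
  · rintro ⟨h₁, hh₁, h₂, hh₂, rfl⟩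
    refine ⟨h₁ * hv a, mul_mem hh₁ (hv_mem a), hv b * h₂, mul_mem (hv_mem b) hh₂, ?_⟩
    simp [mul_assoc]
  · rintro ⟨h₁, hh₁, h₂, hh₂, rfl⟩
    refine ⟨h₁ * hv a, mul_mem hh₁ (hv_mem a), hv b * h₂, mul_mem (hv_mem b) hh₂, ?_⟩
    simp only [mul_assoc, hv_sq']

lemma rep_mem : ∀ i : Fin 8, rep i ∈ Gm := by
  have h0 : s0 ∈ Gm := Submonoid.subset_closure (by simp)
  have h1 : s1 ∈ Gm := Submonoid.subset_closure (by simp)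
  have h2 : s2 ∈ Gm := Submonoid.subset_closure (by simp)
  intro i
  fin_cases i
  · exact one_mem _
  · exact h1
  · exact mul_mem (mul_mem h1 h2) h1
  · exact mul_mem (mul_mem h1 h0) h1
  · exact mul_mem (mul_mem (mul_mem h1 h0) h2) h1
  · exact mul_mem (mul_mem (mul_mem (mul_mem h1 h2) h1) h0) h1
  · exact mul_mem (mul_mem (mul_mem (mul_mem h1 h0) h1) h2) h1
  · exact mul_mem (mul_mem (mul_mem (mul_mem (mul_mem (mul_mem h1 h0) h2) h1) h0) h2) h1

lemma ds_mem_self (g : Matrix (Fin 6) (Fin 6) ℤ) : g ∈ ds g :=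
  ⟨1, one_mem _, 1, one_mem _, by simp⟩

lemma ds_inj : Function.Injective (fun i : Fin 8 => ds (rep i)) := by
  intro i j hij
  by_contra hne
  replace hij : ds (rep i) = ds (rep j) := hij
  have : rep i ∈ ds (rep j) := by
    rw [← hij]; exact ds_mem_self _
  obtain ⟨h₁, hh₁, h₂, hh₂, heq⟩ := this
  obtain ⟨a, rfl⟩ := (mem_Hm_iff h₁).mp hh₁
  obtain ⟨b, rfl⟩ := (mem_Hm_iff h₂).mp hh₂
  exact sep i j hne a b heq

lemma set_eq :
    {d : Set (Matrix (Fin 6) (Fin 6) ℤ) | ∃ g ∈ Gm, d = ds g} =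
      Set.range (fun i : Fin 8 => ds (rep i)) := by
  ext d
  constructor
  · rintro ⟨g, hg, rfl⟩
    obtain ⟨i, a, b, rfl⟩ := Q_of_mem hg
    exact ⟨i, (ds_hv (rep i) a b).symm⟩
  · rintro ⟨i, rfl⟩
    exact ⟨rep i, rep_mem i, rfl⟩

lemma range_eq :
    Set.range (fun i : Fin 8 => ds (rep i)) =
      {ds 1, ds s1, ds (s1 * s2 * s1), ds (s1 * s0 * s1),
        ds (s1 * s0 * s2 * s1), ds (s1 * s2 * s1 * s0 * s1),
        ds (s1 * s0 * s1 * s2 * s1), ds (s1 * s0 * s2 * s1 * s0 * s2 * s1)} := by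
  ext d
  simp only [Set.mem_range, Set.mem_insert_iff, Set.mem_singleton_iff]
  constructor
  · rintro ⟨i, rfl⟩
    fin_cases i
    · exact Or.inl rfl
    · exact Or.inr (Or.inl rfl)
    · exact Or.inr (Or.inr (Or.inl rfl))
    · exact Or.inr (Or.inr (Or.inr (Or.inl rfl)))
    · exact Or.inr (Or.inr (Or.inr (Or.inr (Or.inl rfl))))
    · exact Or.inr (Or.inr (Or.inr (Or.inr (Or.inr (Or.inl rfl)))))
    · exact Or.inr (Or.inr (Or.inr (Or.inr (Or.inr (Or.inr (Or.inl rfl))))))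
    · exact Or.inr (Or.inr (Or.inr (Or.inr (Or.inr (Or.inr (Or.inr rfl))))))
  · rintro (rfl | rfl | rfl | rfl | rfl | rfl | rfl | rfl)
    exacts [⟨0, rfl⟩, ⟨1, rfl⟩, ⟨2, rfl⟩, ⟨3, rfl⟩, ⟨4, rfl⟩, ⟨5, rfl⟩, ⟨6, rfl⟩, ⟨7, rfl⟩]

lemma main :
    {d : Set (Matrix (Fin 6) (Fin 6) ℤ) | ∃ g ∈ Gm, d = ds g} =
      {ds 1, ds s1, ds (s1 * s2 * s1), ds (s1 * s0 * s1),
        ds (s1 * s0 * s2 * s1), ds (s1 * s2 * s1 * s0 * s1),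
        ds (s1 * s0 * s1 * s2 * s1), ds (s1 * s0 * s2 * s1 * s0 * s2 * s1)} ∧
    Set.ncard {d : Set (Matrix (Fin 6) (Fin 6) ℤ) | ∃ g ∈ Gm, d = ds g} = 8 := by
  refine ⟨set_eq.trans range_eq, ?_⟩
  rw [set_eq, ← Set.image_univ, Set.ncard_image_of_injective _ ds_inj, Set.ncard_univ]
  simp

end RectDoset

/-- In the order-72 group `G = ⟨S₀, S₁, S₂⟩` with `H = ⟨S₀, S₂⟩`, the double
coset space `H\G/H` has exactly 8 elements, represented by
`1, s₁, s₁s₂s₁, s₁s₀s₁, s₁s₀s₂s₁, s₁s₂s₁s₀s₁, s₁s₀s₁s₂s₁, s₁s₀s₂s₁s₀s₂s₁`. -/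
theorem rectangular_double_coset_decomposition :
    let S₀ : Matrix (Fin 6) (Fin 6) ℤ :=
      !![0,1,0,0,0,0; 1,0,0,0,0,0; 0,0,1,0,0,0; 0,0,0,1,0,0; 0,0,0,0,1,0; 0,0,0,0,0,1]
    let S₁ : Matrix (Fin 6) (Fin 6) ℤ :=
      !![1,0,0,0,0,0; 0,-1,0,0,1,0; 0,0,-1,0,1,0; 0,-1,-1,0,1,1; 0,0,0,0,1,0; 0,-1,-1,1,1,0]
    let S₂ : Matrix (Fin 6) (Fin 6) ℤ :=
      !![1,0,0,0,0,0; 0,1,0,0,0,0; 0,0,1,0,0,0; 0,0,0,1,0,0; 0,0,0,0,0,1; 0,0,0,0,1,0]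
    let G : Submonoid (Matrix (Fin 6) (Fin 6) ℤ) := Submonoid.closure {S₀, S₁, S₂}
    let H : Submonoid (Matrix (Fin 6) (Fin 6) ℤ) := Submonoid.closure {S₀, S₂}
    let doset : Matrix (Fin 6) (Fin 6) ℤ → Set (Matrix (Fin 6) (Fin 6) ℤ) :=
      fun g => {x | ∃ h₁ ∈ H, ∃ h₂ ∈ H, x = h₁ * g * h₂}
    {d : Set (Matrix (Fin 6) (Fin 6) ℤ) | ∃ g ∈ G, d = doset g} =
      {doset 1, doset S₁, doset (S₁ * S₂ * S₁), doset (S₁ * S₀ * S₁),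
        doset (S₁ * S₀ * S₂ * S₁), doset (S₁ * S₂ * S₁ * S₀ * S₁),
        doset (S₁ * S₀ * S₁ * S₂ * S₁), doset (S₁ * S₀ * S₂ * S₁ * S₀ * S₂ * S₁)} ∧
    Set.ncard {d : Set (Matrix (Fin 6) (Fin 6) ℤ) | ∃ g ∈ G, d = doset g} = 8 := by
  intro S₀ S₁ S₂ G H doset
  exact RectDoset.main
end

section
/- The group generated by the 6×6 matrix S₁ (rows (1,0,0,0,0,0), (0,-1,0,0,1,0), (0,0,-1,0,1,0), (0,-1,-1,0,1,1), (0,0,0,0,1,0), (0,-1,-1,1,1,0)) and the permutation matrix S₂ swapping coordinates 5 and 6 satisfies S₁² = S₂² = I and (S₁S₂)⁴ = I, and is isomorphic to the dihedral group of order 8 (the Weyl group W(C₂)). -/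
lemma aux_dihedral {M : Type*} [Monoid M] (s₁ s₂ : M)
    (hA4 : (s₁ * s₂) ^ 4 = 1) (hs2 : s₂ ^ 2 = 1)
    (hcomm : s₂ * (s₁ * s₂) = (s₁ * s₂) ^ 3 * s₂)
    (h1 : (s₁ * s₂) ≠ 1) (h2 : (s₁ * s₂) ^ 2 ≠ 1) (h3 : (s₁ * s₂) ^ 3 ≠ 1)
    (hs : ∀ i < 4, (s₁ * s₂) ^ i * s₂ ≠ 1) :
    Nonempty ((Submonoid.closure {s₁, s₂} : Submonoid M) ≃* DihedralGroup 4) := by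
  set A := s₁ * s₂ with hA
  have hmod : ∀ n : ℕ, A ^ n = A ^ (n % 4) := by
    intro n
    conv_lhs => rw [← Nat.div_add_mod n 4]
    rw [pow_add, pow_mul, hA4, one_pow, one_mul]
  have hval : ∀ i j : ZMod 4, A ^ (i + j).val = A ^ i.val * A ^ j.val := by
    intro i j
    rw [← pow_add, hmod (i.val + j.val), ZMod.val_add]
  have hsA : ∀ n : ℕ, s₂ * A ^ n = A ^ (3 * n) * s₂ := by
    intro n
    induction n with
    | zero => simp
    | succ k ih =>
      rw [pow_succ, ← mul_assoc, ih, mul_assoc, hcomm, ← mul_assoc, ← pow_add]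
      ring_nf
  have hAs : ∀ n : ℕ, A ^ n * s₂ = s₂ * A ^ (3 * n) := by
    intro n
    rw [hsA (3 * n), hmod (3 * (3 * n)), hmod n]
    congr 2
    omega
  have hsub : ∀ i j : ZMod 4, A ^ (i - j).val = A ^ (i.val + 3 * j.val) := by
    intro i j
    rw [hmod (i.val + 3 * j.val)]
    congr 1
    revert i j; decide
  let f : DihedralGroup 4 → M := fun x =>
    match x with
    | DihedralGroup.r i => A ^ i.val
    | DihedralGroup.sr i => s₂ * A ^ i.val
  have fmul : ∀ x y, f (x * y) = f x * f y := by
    intro x y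
    rcases x with i | i <;> rcases y with j | j <;>
      simp only [f, DihedralGroup.r_mul_r, DihedralGroup.r_mul_sr,
        DihedralGroup.sr_mul_r, DihedralGroup.sr_mul_sr]
    · exact hval i j
    · rw [hsub j i, ← mul_assoc, hAs, mul_assoc, ← pow_add, Nat.add_comm]
    · rw [hval i j, mul_assoc]
    · rw [hsub j i,
        show s₂ * A ^ i.val * (s₂ * A ^ j.val) = s₂ * (A ^ i.val * s₂) * A ^ j.val by
          rw [mul_assoc, mul_assoc, mul_assoc],
        hAs, ← mul_assoc, ← sq, hs2, one_mul, ← pow_add, Nat.add_comm]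
  let F : DihedralGroup 4 →* M :=
    { toFun := f, map_one' := by show A ^ (0 : ZMod 4).val = 1; simp, map_mul' := fmul }
  have hAmem : A ∈ Submonoid.closure ({s₁, s₂} : Set M) :=
    mul_mem (Submonoid.subset_closure (by simp)) (Submonoid.subset_closure (by simp))
  have hs2mem : s₂ ∈ Submonoid.closure ({s₁, s₂} : Set M) :=
    Submonoid.subset_closure (by simp)
  have hmem : ∀ x, F x ∈ Submonoid.closure ({s₁, s₂} : Set M) := by
    intro x
    rcases x with i | i
    · exact pow_mem hAmem _
    · exact mul_mem hs2mem (pow_mem hAmem _)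
  let G : DihedralGroup 4 →* (Submonoid.closure ({s₁, s₂} : Set M)) :=
    F.codRestrict _ hmem
  have hinj : Function.Injective G := by
    have hFinj : Function.Injective F := by
      rw [injective_iff_map_eq_one]
      intro x hx
      rcases x with i | i
      · have hx' : A ^ i.val = 1 := hx
        have hlt : i.val < 4 := i.val_lt
        interval_cases h : i.val
        · have hi0 : i = 0 := by
            rwa [← ZMod.val_eq_zero]
          rw [hi0]
          rfl
        · exact absurd (by simpa using hx') h1
        · exact absurd (by simpa using hx') h2
        · exact absurd (by simpa using hx') h3
      · have hx' : s₂ * A ^ i.val = 1 := hx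
        have : A ^ (3 * i.val % 4) * s₂ = 1 := by
          rw [← hmod, ← hsA, hx']
        exact absurd this (hs _ (Nat.mod_lt _ (by norm_num)))
    intro x y hxy
    exact hFinj (congrArg Subtype.val hxy)
  have hsurj : Function.Surjective G := by
    rintro ⟨x, hx⟩
    have hex : ∃ y, F y = x := by
      induction hx using Submonoid.closure_induction with
      | mem z hz =>
        rcases hz with hz | hz
        · refine ⟨DihedralGroup.sr 3, ?_⟩
          show s₂ * A ^ (3 : ZMod 4).val = z
          have h3v : (3 : ZMod 4).val = 3 := rfl
          rw [h3v, hsA, hmod, show 3 * 3 % 4 = 1 by norm_num, pow_one, hA,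
            mul_assoc, ← sq, hs2, mul_one, hz]
        · refine ⟨DihedralGroup.sr 0, ?_⟩
          show s₂ * A ^ (0 : ZMod 4).val = z
          simpa using (Set.mem_singleton_iff.mp hz).symm
      | one => exact ⟨DihedralGroup.r 0, by show A ^ (0 : ZMod 4).val = 1; simp⟩
      | mul a b _ _ ha hb =>
        obtain ⟨y₁, hy₁⟩ := ha
        obtain ⟨y₂, hy₂⟩ := hb
        exact ⟨y₁ * y₂, by rw [map_mul, hy₁, hy₂]⟩
    obtain ⟨y, hy⟩ := hex
    exact ⟨y, Subtype.ext hy⟩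
  exact ⟨(MulEquiv.ofBijective G ⟨hinj, hsurj⟩).symm⟩

/-- The invariance group of the triangular `Aₙ` `₄F₃` series, generated by `S₁`
and `S₂`, satisfies `S₁² = S₂² = I`, `(S₁S₂)⁴ = I` with `(S₁S₂)` of exact
order 4, and is isomorphic to the dihedral group of order 8, i.e. `W(C₂)`. -/
theorem triangular_group_iso_dihedral :
    let S₁ : Matrix (Fin 6) (Fin 6) ℤ :=
      !![1,0,0,0,0,0; 0,-1,0,0,1,0; 0,0,-1,0,1,0; 0,-1,-1,0,1,1; 0,0,0,0,1,0; 0,-1,-1,1,1,0]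
    let S₂ : Matrix (Fin 6) (Fin 6) ℤ :=
      !![1,0,0,0,0,0; 0,1,0,0,0,0; 0,0,1,0,0,0; 0,0,0,1,0,0; 0,0,0,0,0,1; 0,0,0,0,1,0]
    S₁ ^ 2 = 1 ∧ S₂ ^ 2 = 1 ∧ (S₁ * S₂) ^ 4 = 1 ∧ (S₁ * S₂) ^ 2 ≠ 1 ∧
      Nonempty ((Submonoid.closure {S₁, S₂} : Submonoid (Matrix (Fin 6) (Fin 6) ℤ))
        ≃* DihedralGroup 4) := by
  intro S₁ S₂
  refine ⟨by decide, by decide, by decide, by decide, ?_⟩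
  exact aux_dihedral S₁ S₂ (by decide) (by decide) (by decide) (by decide) (by decide)
    (by decide) (by decide)
end

section
/- The group Gᵣ of 8×8 integer matrices generated by B₁, B₂ (as in the Aₙ elliptic Bailey transformations) and the permutation matrices S₀, S₁ (swapping coordinates 2↔3, 3↔4) and T₀, T₁ (swapping coordinates 5↔6, 6↔7) is isomorphic to 𝔖₆ × 𝔖₂, hence has order 1440. -/
/-- The 8×8 permutation matrix swapping coordinates `k` and `l` (0-indexed). -/
def swapMatrix8 (k : Fin 8) (l : Fin 8) : Matrix (Fin 8) (Fin 8) ℤ :=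
  fun i j => if (Equiv.swap k l) i = j then 1 else 0

namespace AnBailey

abbrev PP := Equiv.Perm (Fin 6) × Equiv.Perm (Fin 2)

def bM1 : Matrix (Fin 8) (Fin 8) ℤ :=
  !![2,-1,0,0,0,-1,-1,1; 1,0,0,0,0,-1,-1,1; 0,0,1,0,0,0,0,0; 0,0,0,1,0,0,0,0;
     0,0,0,0,1,0,0,0; 1,-1,0,0,0,0,-1,1; 1,-1,0,0,0,-1,0,1; 0,0,0,0,0,0,0,1]

def bM2 : Matrix (Fin 8) (Fin 8) ℤ :=
  !![2,-1,-1,-1,0,0,0,1; 1,0,-1,-1,0,0,0,1; 1,-1,0,-1,0,0,0,1; 1,-1,-1,0,0,0,0,1;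
     0,0,0,0,1,0,0,0; 0,0,0,0,0,1,0,0; 0,0,0,0,0,0,1,0; 0,0,0,0,0,0,0,1]

def gset : Set (Matrix (Fin 8) (Fin 8) ℤ) :=
  {bM1, bM2, swapMatrix8 1 2, swapMatrix8 2 3, swapMatrix8 4 5, swapMatrix8 5 6}

def Gm : Submonoid (Matrix (Fin 8) (Fin 8) ℤ) := Submonoid.closure gset

/-- The 12 special vectors, indexed by `Fin 6 × Fin 2`. -/
def uu : Fin 6 → Fin 2 → (Fin 8 → ℤ) :=
  ![![![-2,-1,-1,-1,-1,-1,0,0], ![-1,0,0,0,-1,-1,0,0]],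
    ![![-2,-1,-1,-1,-1,0,-1,0], ![-1,0,0,0,-1,0,-1,0]],
    ![![-2,-1,-1,-1,0,-1,-1,0], ![-1,0,0,0,0,-1,-1,0]],
    ![![-1,0,-1,-1,0,0,0,0], ![0,1,0,0,0,0,0,0]],
    ![![-1,-1,0,-1,0,0,0,0], ![0,0,1,0,0,0,0,0]],
    ![![-1,-1,-1,0,0,0,0,0], ![0,0,0,1,0,0,0,0]]]

def w1 : Fin 8 → ℤ := ![3,1,1,1,1,1,1,0]
def w2 : Fin 8 → ℤ := ![-1,0,0,0,0,0,0,1]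

/-- `spec g p` : the matrix `g` permutes the 12 vectors via the pair of
permutations `p` and fixes `w1`, `w2`. -/
def spec (g : Matrix (Fin 8) (Fin 8) ℤ) (p : PP) : Prop :=
  (∀ i ε, g.mulVec (uu i ε) = uu (p.1 i) (p.2 ε)) ∧ g.mulVec w1 = w1 ∧ g.mulVec w2 = w2

lemma spec_one : spec 1 1 :=
  ⟨fun i ε => by rw [Matrix.one_mulVec]; rfl, Matrix.one_mulVec _, Matrix.one_mulVec _⟩

lemma spec_mul {g h : Matrix (Fin 8) (Fin 8) ℤ} {p q : PP}
    (hg : spec g p) (hh : spec h q) : spec (g * h) (p * q) := by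
  refine ⟨fun i ε => ?_, ?_, ?_⟩
  · rw [← Matrix.mulVec_mulVec, hh.1 i ε, hg.1]; rfl
  · rw [← Matrix.mulVec_mulVec, hh.2.1, hg.2.1]
  · rw [← Matrix.mulVec_mulVec, hh.2.2, hg.2.2]

lemma uu_inj : ∀ (i : Fin 6) (ε : Fin 2) (j : Fin 6) (δ : Fin 2),
    uu i ε = uu j δ → i = j ∧ ε = δ := by decide

lemma spec_unique {g : Matrix (Fin 8) (Fin 8) ℤ} {p q : PP}
    (hp : spec g p) (hq : spec g q) : p = q := by
  have h : ∀ i ε, uu (p.1 i) (p.2 ε) = uu (q.1 i) (q.2 ε) :=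
    fun i ε => (hp.1 i ε).symm.trans (hq.1 i ε)
  exact Prod.ext (Equiv.ext fun i => (uu_inj _ _ _ _ (h i 0)).1)
    (Equiv.ext fun ε => (uu_inj _ _ _ _ (h 0 ε)).2)

lemma spec_bM1 : spec bM1 (Equiv.swap 2 3, 1) := ⟨by decide, by decide, by decide⟩
lemma spec_bM2 : spec bM2 (1, Equiv.swap 0 1) := ⟨by decide, by decide, by decide⟩
lemma spec_S0 : spec (swapMatrix8 1 2) (Equiv.swap 3 4, 1) := ⟨by decide, by decide, by decide⟩
lemma spec_S1 : spec (swapMatrix8 2 3) (Equiv.swap 4 5, 1) := ⟨by decide, by decide, by decide⟩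
lemma spec_T0 : spec (swapMatrix8 4 5) (Equiv.swap 1 2, 1) := ⟨by decide, by decide, by decide⟩
lemma spec_T1 : spec (swapMatrix8 5 6) (Equiv.swap 0 1, 1) := ⟨by decide, by decide, by decide⟩

lemma mem_spec {x : Matrix (Fin 8) (Fin 8) ℤ} (hx : x ∈ Gm) : ∃ p : PP, spec x p := by
  induction hx using Submonoid.closure_induction with
  | mem y hy =>
    simp only [gset, Set.mem_insert_iff, Set.mem_singleton_iff] at hy
    rcases hy with rfl | rfl | rfl | rfl | rfl | rfl
    exacts [⟨_, spec_bM1⟩, ⟨_, spec_bM2⟩, ⟨_, spec_S0⟩, ⟨_, spec_S1⟩,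
      ⟨_, spec_T0⟩, ⟨_, spec_T1⟩]
  | one => exact ⟨1, spec_one⟩
  | mul a b _ _ iha ihb =>
    obtain ⟨p, hp⟩ := iha
    obtain ⟨q, hq⟩ := ihb
    exact ⟨p * q, spec_mul hp hq⟩

/-- Matrix whose columns are `uu 0 0, uu 0 1, uu 1 0, uu 2 0, uu 3 0, uu 4 0, w1, w2`. -/
def VV : Matrix (Fin 8) (Fin 8) ℤ :=
  !![-2,-1,-2,-2,-1,-1,3,-1; -1,0,-1,-1,0,-1,1,0; -1,0,-1,-1,-1,0,1,0;
     -1,0,-1,-1,-1,-1,1,0; -1,-1,-1,0,0,0,1,0; -1,-1,0,-1,0,0,1,0;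
     0,0,-1,-1,0,0,1,0; 0,0,0,0,0,0,0,1]

def WW : Matrix (Fin 8) (Fin 8) ℤ :=
  !![0,-1,-1,1,0,0,1,0; 1,1,1,-2,-1,-1,-1,1; 1,0,0,-1,-1,0,-1,1;
     1,0,0,-1,0,-1,-1,1; 0,1,0,-1,0,0,0,0; 0,0,1,-1,0,0,0,0;
     2,0,0,-2,-1,-1,-1,2; 0,0,0,0,0,0,0,1]

lemma VW : VV * WW = 1 := by decide

lemma sum_col {g h : Matrix (Fin 8) (Fin 8) ℤ} {v : Fin 8 → ℤ}
    (hv : g.mulVec v = h.mulVec v) (i : Fin 8) {f : Fin 8 → ℤ} (hf : ∀ k, f k = v k) :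
    ∑ k, g i k * f k = ∑ k, h i k * f k := by
  have h2 := congrFun hv i
  simp only [Matrix.mulVec, dotProduct] at h2
  rw [funext hf]
  exact h2

lemma eq_of_agree {g h : Matrix (Fin 8) (Fin 8) ℤ}
    (hu : ∀ i ε, g.mulVec (uu i ε) = h.mulVec (uu i ε))
    (h1 : g.mulVec w1 = h.mulVec w1) (h2 : g.mulVec w2 = h.mulVec w2) : g = h := by
  have hgV : g * VV = h * VV := by
    ext i j
    rw [Matrix.mul_apply, Matrix.mul_apply]
    fin_cases j
    · exact sum_col (hu 0 0) i (by decide)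
    · exact sum_col (hu 0 1) i (by decide)
    · exact sum_col (hu 1 0) i (by decide)
    · exact sum_col (hu 2 0) i (by decide)
    · exact sum_col (hu 3 0) i (by decide)
    · exact sum_col (hu 4 0) i (by decide)
    · exact sum_col h1 i (by decide)
    · exact sum_col h2 i (by decide)
  calc g = g * (VV * WW) := by rw [VW, mul_one]
    _ = g * VV * WW := by rw [mul_assoc]
    _ = h * VV * WW := by rw [hgV]
    _ = h * (VV * WW) := by rw [mul_assoc]
    _ = h := by rw [VW, mul_one]

noncomputable def psi : Gm →* PP where
  toFun g := Classical.choose (mem_spec g.2)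
  map_one' := spec_unique (Classical.choose_spec (mem_spec (1 : Gm).2)) spec_one
  map_mul' g h := spec_unique (Classical.choose_spec (mem_spec (g * h).2))
    (spec_mul (Classical.choose_spec (mem_spec g.2)) (Classical.choose_spec (mem_spec h.2)))

lemma psi_spec (g : Gm) : spec g.1 (psi g) := Classical.choose_spec (mem_spec g.2)

lemma psi_inj : Function.Injective psi := by
  intro a b hab
  have ha := psi_spec a
  have hb := psi_spec b
  rw [hab] at ha
  exact Subtype.ext (eq_of_agree
    (fun i ε => (ha.1 i ε).trans (hb.1 i ε).symm)
    (ha.2.1.trans hb.2.1.symm) (ha.2.2.trans hb.2.2.symm))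

lemma mem_gset (m : Matrix (Fin 8) (Fin 8) ℤ)
    (hm : m = bM1 ∨ m = bM2 ∨ m = swapMatrix8 1 2 ∨ m = swapMatrix8 2 3 ∨
      m = swapMatrix8 4 5 ∨ m = swapMatrix8 5 6) : m ∈ Gm :=
  Submonoid.subset_closure (by
    simp only [gset, Set.mem_insert_iff, Set.mem_singleton_iff]; exact hm)

lemma psi_of_spec {m : Matrix (Fin 8) (Fin 8) ℤ} (hm : m ∈ Gm) {p : PP}
    (hs : spec m p) : p ∈ MonoidHom.mrange psi :=
  ⟨⟨m, hm⟩, (spec_unique (psi_spec ⟨m, hm⟩) hs)⟩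

lemma psi_surj : Function.Surjective psi := by
  have h6 : ∀ σ : Equiv.Perm (Fin 6), ((σ, 1) : PP) ∈ MonoidHom.mrange psi := by
    have hle : Submonoid.closure
        (Set.range fun i : Fin 5 => Equiv.swap (Fin.castSucc i) (Fin.succ i)) ≤
        Submonoid.comap (MonoidHom.inl (Equiv.Perm (Fin 6)) (Equiv.Perm (Fin 2)))
          (MonoidHom.mrange psi) := by
      rw [Submonoid.closure_le]
      rintro x ⟨i, rfl⟩
      fin_cases i
      · exact psi_of_spec (mem_gset _ (by tauto)) spec_T1
      · exact psi_of_spec (mem_gset _ (by tauto)) spec_T0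
      · exact psi_of_spec (mem_gset _ (by tauto)) spec_bM1
      · exact psi_of_spec (mem_gset _ (by tauto)) spec_S0
      · exact psi_of_spec (mem_gset _ (by tauto)) spec_S1
    intro σ
    exact hle (by rw [Equiv.Perm.mclosure_swap_castSucc_succ]; exact Submonoid.mem_top σ)
  have h2 : ∀ τ : Equiv.Perm (Fin 2), ((1, τ) : PP) ∈ MonoidHom.mrange psi := by
    have hle : Submonoid.closure
        (Set.range fun i : Fin 1 => Equiv.swap (Fin.castSucc i) (Fin.succ i)) ≤
        Submonoid.comap (MonoidHom.inr (Equiv.Perm (Fin 6)) (Equiv.Perm (Fin 2)))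
          (MonoidHom.mrange psi) := by
      rw [Submonoid.closure_le]
      rintro x ⟨i, rfl⟩
      fin_cases i
      · exact psi_of_spec (mem_gset _ (by tauto)) spec_bM2
    intro τ
    exact hle (by rw [Equiv.Perm.mclosure_swap_castSucc_succ]; exact Submonoid.mem_top τ)
  intro p
  have hp : p ∈ MonoidHom.mrange psi := by
    have := mul_mem (h6 p.1) (h2 p.2)
    simpa using this
  exact hp

noncomputable def psiEquiv : Gm ≃* PP :=
  MulEquiv.ofBijective psi ⟨psi_inj, psi_surj⟩

lemma card_Gm : Nat.card Gm = 1440 := by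
  rw [Nat.card_congr psiEquiv.toEquiv]
  simp only [Nat.card_eq_fintype_card, Fintype.card_prod, Fintype.card_perm, Fintype.card_fin]
  decide

end AnBailey

/-- The group `Gᵣ` generated by `B₁, B₂, S₀, S₁, T₀, T₁` is isomorphic to
`𝔖₆ × 𝔖₂`, hence has order 1440.  (All generators are involutions, so the
submonoid they generate is a group.) -/
theorem an_bailey_group_iso :
    let B₁ : Matrix (Fin 8) (Fin 8) ℤ :=
      !![2,-1,0,0,0,-1,-1,1; 1,0,0,0,0,-1,-1,1; 0,0,1,0,0,0,0,0; 0,0,0,1,0,0,0,0;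
         0,0,0,0,1,0,0,0; 1,-1,0,0,0,0,-1,1; 1,-1,0,0,0,-1,0,1; 0,0,0,0,0,0,0,1]
    let B₂ : Matrix (Fin 8) (Fin 8) ℤ :=
      !![2,-1,-1,-1,0,0,0,1; 1,0,-1,-1,0,0,0,1; 1,-1,0,-1,0,0,0,1; 1,-1,-1,0,0,0,0,1;
         0,0,0,0,1,0,0,0; 0,0,0,0,0,1,0,0; 0,0,0,0,0,0,1,0; 0,0,0,0,0,0,0,1]
    let S₀ := swapMatrix8 1 2
    let S₁ := swapMatrix8 2 3
    let T₀ := swapMatrix8 4 5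
    let T₁ := swapMatrix8 5 6
    let G : Submonoid (Matrix (Fin 8) (Fin 8) ℤ) :=
      Submonoid.closure {B₁, B₂, S₀, S₁, T₀, T₁}
    Nonempty (G ≃* Equiv.Perm (Fin 6) × Equiv.Perm (Fin 2)) ∧ Nat.card G = 1440 := by
  intro B₁ B₂ S₀ S₁ T₀ T₁ G
  exact ⟨⟨AnBailey.psiEquiv⟩, AnBailey.card_Gm⟩
end
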